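/- Let μ ∈ ℝ, σ > 0, and let X₁, …, X_B be independent random variables each with law gaussianReal μ σ² (the normal distribution with mean μ and variance σ²). Then E[sign((1/B)·(X₁ + ⋯ + X_B))] = erf(√(B/2)·μ/σ), where erf(x) := (2/√π) ∫₀ˣ exp(−t²) dt and sign(x) is 1 for x > 0, −1 for x < 0, and 0 for x = 0. -/

import Mathlib

open MeasureTheory ProbabilityTheory

/-- The Gauss error function. -/
noncomputable def erf (x : ℝ) : ℝ :=
  (2 / Real.sqrt Real.pi) * ∫ t in (0 : ℝ)..x, Real.exp (-t ^ 2)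

open Real Set
open scoped NNReal ENNReal

/-- Pointwise product identity for Gaussian pdfs (completing the square). -/
lemma gaussianPDFReal_mul (m₁ m₂ : ℝ) (v₁ v₂ : ℝ≥0) (h1 : v₁ ≠ 0) (h2 : v₂ ≠ 0) (x y : ℝ) :
    gaussianPDFReal m₁ v₁ x * gaussianPDFReal m₂ v₂ (y - x) =
      gaussianPDFReal (m₁ + m₂) (v₁ + v₂) y *
        gaussianPDFReal (m₁ + v₁ * (y - m₁ - m₂) / (v₁ + v₂)) (v₁ * v₂ / (v₁ + v₂)) x := by
  have hv1 : (0:ℝ) < v₁ := lt_of_le_of_ne (v₁.coe_nonneg) (by exact_mod_cast (Ne.symm h1))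
  have hv2 : (0:ℝ) < v₂ := lt_of_le_of_ne (v₂.coe_nonneg) (by exact_mod_cast (Ne.symm h2))
  have hv3 : (0:ℝ) < (v₁:ℝ) + v₂ := by linarith
  unfold gaussianPDFReal
  push_cast
  rw [mul_mul_mul_comm, mul_mul_mul_comm ((√(2 * π * ((v₁:ℝ) + v₂)))⁻¹), ← Real.exp_add,
    ← Real.exp_add]
  congr 1
  · rw [← mul_inv, ← mul_inv, ← Real.sqrt_mul (by positivity), ← Real.sqrt_mul (by positivity)]
    congr 1
    field_simp
  · congr 1
    field_simp
    ring

lemma gaussianReal_conv (m₁ m₂ : ℝ) (v₁ v₂ : ℝ≥0) (h1 : v₁ ≠ 0) (h2 : v₂ ≠ 0) :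
    Measure.map (fun p : ℝ × ℝ => p.1 + p.2)
        ((gaussianReal m₁ v₁).prod (gaussianReal m₂ v₂)) =
      gaussianReal (m₁ + m₂) (v₁ + v₂) := by
  have hv3 : v₁ + v₂ ≠ 0 := fun h => h1 (by simpa using (add_eq_zero.mp h).1)
  have hw : v₁ * v₂ / (v₁ + v₂) ≠ 0 := by
    rw [ne_eq, div_eq_zero_iff, not_or]
    exact ⟨mul_ne_zero h1 h2, hv3⟩
  have hInt : ∀ y : ℝ,
      Integrable (fun x => gaussianPDFReal m₁ v₁ x * gaussianPDFReal m₂ v₂ (y - x)) := by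
    intro y
    simp_rw [gaussianPDFReal_mul m₁ m₂ v₁ v₂ h1 h2 _ y]
    exact (integrable_gaussianPDFReal _ _).const_mul _
  have hIntEq : ∀ y : ℝ,
      ∫ x, gaussianPDFReal m₁ v₁ x * gaussianPDFReal m₂ v₂ (y - x)
        = gaussianPDFReal (m₁ + m₂) (v₁ + v₂) y := by
    intro y
    simp_rw [gaussianPDFReal_mul m₁ m₂ v₁ v₂ h1 h2 _ y]
    rw [MeasureTheory.integral_const_mul, integral_gaussianPDFReal_eq_one _ hw, mul_one]
  have hjm : Measurable (fun p : ℝ × ℝ => gaussianPDF (m₂ + p.1) v₂ p.2) := by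
    apply Measurable.ennreal_ofReal
    unfold gaussianPDFReal
    fun_prop
  ext s hs
  rw [Measure.map_apply measurable_add hs, Measure.prod_apply (measurable_add hs)]
  have h_inner : ∀ x : ℝ,
      gaussianReal m₂ v₂ (Prod.mk x ⁻¹' ((fun p : ℝ × ℝ => p.1 + p.2) ⁻¹' s))
        = ∫⁻ y in s, gaussianPDF (m₂ + x) v₂ y := by
    intro x
    have : (Prod.mk x ⁻¹' ((fun p : ℝ × ℝ => p.1 + p.2) ⁻¹' s)) = (fun y => x + y) ⁻¹' s := rfl
    rw [this, ← Measure.map_apply (measurable_const_add x) hs, gaussianReal_map_const_add x,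
      gaussianReal_apply _ h2 s]
  rw [lintegral_congr h_inner]
  rw [gaussianReal_of_var_ne_zero _ h1,
    lintegral_withDensity_eq_lintegral_mul _ (measurable_gaussianPDF _ _)
      (Measurable.lintegral_prod_right' (f := fun p : ℝ × ℝ => gaussianPDF (m₂ + p.1) v₂ p.2) hjm)]
  simp only [Pi.mul_apply]
  have hswap : ∫⁻ x, gaussianPDF m₁ v₁ x * ∫⁻ y in s, gaussianPDF (m₂ + x) v₂ y
      = ∫⁻ y in s, ∫⁻ x, gaussianPDF m₁ v₁ x * gaussianPDF (m₂ + x) v₂ y := by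
    have hc : ∀ x : ℝ, gaussianPDF m₁ v₁ x * ∫⁻ y in s, gaussianPDF (m₂ + x) v₂ y
        = ∫⁻ y in s, gaussianPDF m₁ v₁ x * gaussianPDF (m₂ + x) v₂ y := fun x =>
      (lintegral_const_mul _ (hjm.comp measurable_prodMk_left)).symm
    rw [lintegral_congr hc]
    exact lintegral_lintegral_swap
      (((measurable_gaussianPDF m₁ v₁).comp measurable_fst).mul hjm).aemeasurable
  rw [hswap, gaussianReal_apply _ hv3 s]
  apply setLIntegral_congr_fun hs
  intro y _
  have hofreal : ∀ x : ℝ, gaussianPDF m₁ v₁ x * gaussianPDF (m₂ + x) v₂ y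
      = ENNReal.ofReal (gaussianPDFReal m₁ v₁ x * gaussianPDFReal m₂ v₂ (y - x)) := by
    intro x
    rw [gaussianPDFReal_sub y x, ENNReal.ofReal_mul (gaussianPDFReal_nonneg _ _ _)]
    rfl
  simp_rw [hofreal]
  rw [← ofReal_integral_eq_lintegral_ofReal (hInt y)
    (ae_of_all _ fun x => mul_nonneg (gaussianPDFReal_nonneg _ _ _)
      (gaussianPDFReal_nonneg _ _ _)), hIntEq y]
  rfl

lemma indepFun_gaussian_add {Ω : Type*} [MeasureSpace Ω]
    [IsProbabilityMeasure (volume : Measure Ω)] {X Y : Ω → ℝ}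
    (hX : Measurable X) (hY : Measurable Y) (hXY : IndepFun X Y volume)
    {m₁ m₂ : ℝ} {v₁ v₂ : ℝ≥0} (h1 : v₁ ≠ 0) (h2 : v₂ ≠ 0)
    (hlX : Measure.map X volume = gaussianReal m₁ v₁)
    (hlY : Measure.map Y volume = gaussianReal m₂ v₂) :
    Measure.map (fun ω => X ω + Y ω) volume = gaussianReal (m₁ + m₂) (v₁ + v₂) := by
  have h := (indepFun_iff_map_prod_eq_prod_map_map hX.aemeasurable hY.aemeasurable).mp hXY
  have hcomp : (fun ω => X ω + Y ω)
      = (fun p : ℝ × ℝ => p.1 + p.2) ∘ (fun ω => (X ω, Y ω)) := rfl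
  rw [hcomp, ← Measure.map_map measurable_add (hX.prodMk hY), h, hlX, hlY,
    gaussianReal_conv m₁ m₂ v₁ v₂ h1 h2]

lemma iIndepFun_gaussian_sum {Ω : Type*} [MeasureSpace Ω]
    [IsProbabilityMeasure (volume : Measure Ω)] {ι : Type*} {X : ι → Ω → ℝ}
    (hX : ∀ i, Measurable (X i))
    (hindep : iIndepFun X volume)
    {m : ℝ} {v : ℝ≥0} (hv : v ≠ 0)
    (hlaw : ∀ i, Measure.map (X i) volume = gaussianReal m v)
    (s : Finset ι) (hs : s.Nonempty) :
    Measure.map (fun ω => ∑ i ∈ s, X i ω) volume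
      = gaussianReal (s.card * m) (s.card * v) := by
  induction hs using Finset.Nonempty.cons_induction with
  | singleton i => simpa using hlaw i
  | cons i t hi ht ih =>
    have hsum : Measurable (fun ω => ∑ j ∈ t, X j ω) := by
      apply Finset.measurable_sum
      exact fun j _ => hX j
    have hindep' : IndepFun (fun ω => ∑ j ∈ t, X j ω) (X i) volume := by
      have h' := hindep.indepFun_finset_sum_of_notMem hX hi
      have hfun : (∑ j ∈ t, X j) = fun ω => ∑ j ∈ t, X j ω := by
        funext ω; simp
      rwa [hfun] at h'
    have := indepFun_gaussian_add (hX i) hsum hindep'.symm hv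
      (mul_ne_zero (Nat.cast_ne_zero.mpr (Finset.card_pos.mpr ht).ne') hv)
      (hlaw i) ih
    have hgoal : (fun ω => ∑ j ∈ Finset.cons i t hi, X j ω)
        = fun ω => X i ω + ∑ j ∈ t, X j ω := by
      funext ω
      rw [Finset.sum_cons]
    rw [hgoal, this]
    congr 1
    · rw [Finset.card_cons]
      push_cast
      ring
    · rw [Finset.card_cons]
      push_cast
      ring

/-- The integral of the sign function against a Gaussian measure. -/
lemma integral_sign_gaussianReal (m : ℝ) (v : ℝ≥0) (hv : v ≠ 0) :
    ∫ x, Real.sign x ∂(gaussianReal m v) = erf (m / Real.sqrt (2 * v)) := by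
  have hvpos : (0:ℝ) < v := lt_of_le_of_ne v.coe_nonneg (by exact_mod_cast (Ne.symm hv))
  set f : ℝ → ℝ := gaussianPDFReal m v with hf_def
  have hf_int : Integrable f := integrable_gaussianPDFReal m v
  have hf_nonneg : ∀ x, 0 ≤ f x := gaussianPDFReal_nonneg m v
  have hf_meas : Measurable f := measurable_gaussianPDFReal m v
  have hsign : ∀ x : ℝ, Real.sign x =
      Set.indicator (Ioi (0:ℝ)) (fun _ => (1:ℝ)) x
        - Set.indicator (Iio (0:ℝ)) (fun _ => (1:ℝ)) x := by
    intro x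
    rcases lt_trichotomy x 0 with h|h|h
    · rw [Real.sign_of_neg h]
      rw [Set.indicator_of_notMem (by simp [mem_Ioi, not_lt, h.le]),
        Set.indicator_of_mem (by simpa using h)]
      norm_num
    · subst h; simp [Real.sign_zero]
    · rw [Real.sign_of_pos h]
      rw [Set.indicator_of_mem (by simpa using h),
        Set.indicator_of_notMem (by simp [mem_Iio, not_lt, h.le])]
      norm_num
  rw [integral_congr_ae (ae_of_all _ hsign),
    integral_sub ((integrable_const 1).indicator measurableSet_Ioi)
      ((integrable_const 1).indicator measurableSet_Iio),
    integral_indicator_const _ measurableSet_Ioi,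
    integral_indicator_const _ measurableSet_Iio,
    measureReal_def, measureReal_def,
    gaussianReal_apply_eq_integral _ hv, gaussianReal_apply_eq_integral _ hv,
    ENNReal.toReal_ofReal (setIntegral_nonneg measurableSet_Ioi fun x _ => hf_nonneg x),
    ENNReal.toReal_ofReal (setIntegral_nonneg measurableSet_Iio fun x _ => hf_nonneg x)]
  simp only [smul_eq_mul, mul_one]
  -- reflection and translation
  set g : ℝ → ℝ := gaussianPDFReal (-m) v with hg_def
  have hfg : ∀ x, f (-x) = g x := by
    intro x
    unfold f g
    unfold gaussianPDFReal
    congr 2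
    ring
  have hgf : ∀ x, g x = f (x + 2*m) := by
    intro x
    unfold f g
    unfold gaussianPDFReal
    congr 2
    ring
  have hA : ∫ x in Ioi (0:ℝ), f x = ∫ x in Iic (0:ℝ), g x := by
    have h := integral_comp_neg_Iic (0:ℝ) f
    rw [neg_zero] at h
    rw [← h]
    exact setIntegral_congr_fun measurableSet_Iic fun x _ => hfg x
  have htrans : ∫ x in Iic (0:ℝ), g x = ∫ x in Iic (2*m), f x := by
    have hmap : Measure.map (fun x : ℝ => x + 2*m) volume = volume :=
      map_add_right_eq_self volume (2*m)
    have hpre : (fun x : ℝ => x + 2*m) ⁻¹' (Iic (2*m)) = Iic 0 := by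
      ext x; simp
    have hsm : AEStronglyMeasurable f (Measure.map (fun x : ℝ => x + 2*m) volume) := by
      rw [hmap]; exact hf_meas.aestronglyMeasurable
    calc ∫ x in Iic (0:ℝ), g x = ∫ x in (fun x : ℝ => x + 2*m) ⁻¹' (Iic (2*m)), f (x + 2*m) := by
          rw [hpre]
          exact setIntegral_congr_fun measurableSet_Iic fun x _ => hgf x
      _ = ∫ y in Iic (2*m), f y ∂(Measure.map (fun x : ℝ => x + 2*m) volume) :=
          (setIntegral_map measurableSet_Iic hsm (measurable_add_const (2*m)).aemeasurable).symm
      _ = ∫ y in Iic (2*m), f y := by rw [hmap]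
  have hB : ∫ x in Iio (0:ℝ), f x = ∫ x in Iic (0:ℝ), f x :=
    (integral_Iic_eq_integral_Iio).symm
  rw [hA, htrans, hB, intervalIntegral.integral_Iic_sub_Iic hf_int.integrableOn hf_int.integrableOn]
  -- now an interval integral computation
  have h2v : (0:ℝ) < 2 * v := by positivity
  have hs : (0:ℝ) < Real.sqrt (2 * v) := Real.sqrt_pos.mpr h2v
  set s : ℝ := Real.sqrt (2 * (v:ℝ)) with hs_def
  have hs2 : s ^ 2 = 2 * (v:ℝ) := Real.sq_sqrt h2v.le
  have hfF : ∀ x, f x = (Real.sqrt (2*π*v))⁻¹ * Real.exp (-(((x - m)/s) ^ 2)) := by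
    intro x
    unfold f
    unfold gaussianPDFReal
    congr 1
    rw [div_pow, hs2, neg_div]
  simp_rw [hfF]
  rw [intervalIntegral.integral_const_mul]
  rw [intervalIntegral.integral_comp_sub_right (fun x => Real.exp (-((x/s) ^ 2))) m]
  rw [intervalIntegral.integral_comp_div (f := fun x => Real.exp (-(x ^ 2))) hs.ne']
  have e1 : ((0:ℝ) - m) / s = -(m/s) := by ring
  have e2 : ((2*m:ℝ) - m) / s = m/s := by ring
  rw [e1, e2]
  have hFc : Continuous fun x : ℝ => Real.exp (-(x ^ 2)) := by continuity
  have hneg : ∫ x in (-(m/s))..(0:ℝ), Real.exp (-(x ^ 2))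
      = ∫ x in (0:ℝ)..(m/s), Real.exp (-(x ^ 2)) := by
    have h := intervalIntegral.integral_comp_neg (a := (0:ℝ)) (b := m/s)
      (fun x => Real.exp (-(x ^ 2)))
    simp only [neg_sq, neg_zero] at h
    rw [← h]
  have hadj := intervalIntegral.integral_add_adjacent_intervals
    (a := -(m/s)) (b := 0) (c := m/s) (μ := volume)
    (hFc.intervalIntegrable _ _) (hFc.intervalIntegrable _ _)
  have hsplit : ∫ x in (-(m/s))..(m/s), Real.exp (-(x ^ 2))
      = 2 * ∫ x in (0:ℝ)..(m/s), Real.exp (-(x ^ 2)) := by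
    rw [← hadj, hneg]; ring
  rw [hsplit]
  have hsqrt : Real.sqrt (2*π*(v:ℝ)) = Real.sqrt π * s := by
    rw [show 2*π*(v:ℝ) = π * (2*(v:ℝ)) by ring, Real.sqrt_mul Real.pi_pos.le]
  unfold erf
  rw [hsqrt]
  have hπ : (0:ℝ) < Real.sqrt π := Real.sqrt_pos.mpr Real.pi_pos
  rw [smul_eq_mul]
  have harg : m / Real.sqrt (2 * (v:ℝ)) = m / s := rfl
  rw [harg]
  field_simp

/-- The expected sign of the mini-batch mean of `B` i.i.d. Gaussian gradients with mean
`μ` and variance `σ²` equals `erf(√(B/2)·μ/σ)`. -/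
theorem expectation_sign_sample_mean {Ω : Type*} [MeasureSpace Ω]
    [IsProbabilityMeasure (volume : Measure Ω)] (μ σ : ℝ) (hσ : 0 < σ)
    (B : ℕ) (hB : 0 < B) (X : Fin B → Ω → ℝ) (hX : ∀ i, Measurable (X i))
    (hindep : iIndepFun X volume)
    (hlaw : ∀ i, Measure.map (X i) volume = gaussianReal μ ⟨σ ^ 2, sq_nonneg σ⟩) :
    ∫ ω, Real.sign ((1 / (B : ℝ)) * ∑ i, X i ω) =
      erf (Real.sqrt ((B : ℝ) / 2) * μ / σ) := by
  have measurable_real_sign : Measurable Real.sign := by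
    unfold Real.sign
    exact Measurable.ite (measurableSet_lt measurable_id measurable_const) measurable_const
      (Measurable.ite (measurableSet_lt measurable_const measurable_id)
        measurable_const measurable_const)
  set v : ℝ≥0 := ⟨σ ^ 2, sq_nonneg σ⟩ with hv_def
  have hvcoe : (v : ℝ) = σ ^ 2 := rfl
  have hv : v ≠ 0 := by
    intro h
    have : (v : ℝ) = 0 := by rw [h]; rfl
    rw [hvcoe] at this
    exact (pow_ne_zero 2 hσ.ne') this
  have hBpos : (0:ℝ) < B := by exact_mod_cast hB
  have hS : Measurable fun ω => ∑ i, X i ω := Finset.measurable_sum _ (fun i _ => hX i)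
  have hlawS := iIndepFun_gaussian_sum hX hindep hv hlaw Finset.univ
    ⟨⟨0, hB⟩, Finset.mem_univ _⟩
  simp only [Finset.card_univ, Fintype.card_fin] at hlawS
  have hsgn : ∀ x : ℝ, Real.sign ((1 / (B:ℝ)) * x) = Real.sign x := by
    intro x
    rcases lt_trichotomy x 0 with h|h|h
    · rw [Real.sign_of_neg h, Real.sign_of_neg (mul_neg_of_pos_of_neg (by positivity) h)]
    · subst h; simp
    · rw [Real.sign_of_pos h, Real.sign_of_pos (by positivity)]
  calc ∫ ω, Real.sign ((1 / (B:ℝ)) * ∑ i, X i ω)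
      = ∫ ω, Real.sign (∑ i, X i ω) := by
        exact integral_congr_ae (ae_of_all _ fun ω => hsgn _)
    _ = ∫ x, Real.sign x ∂(Measure.map (fun ω => ∑ i, X i ω) volume) :=
        (integral_map hS.aemeasurable
          (by rw [hlawS]; exact measurable_real_sign.aestronglyMeasurable)).symm
    _ = ∫ x, Real.sign x ∂(gaussianReal ((B:ℝ) * μ) ((B:ℝ≥0) * v)) := by rw [hlawS]
    _ = erf (((B:ℝ) * μ) / Real.sqrt (2 * ((B:ℝ≥0) * v : ℝ≥0))) :=
        integral_sign_gaussianReal _ _ (mul_ne_zero (Nat.cast_ne_zero.mpr hB.ne') hv)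
    _ = erf (Real.sqrt ((B : ℝ) / 2) * μ / σ) := by
        congr 1
        have hcoe : (((B:ℝ≥0) * v : ℝ≥0) : ℝ) = (B:ℝ) * σ ^ 2 := by
          push_cast [hvcoe]
          ring
        rw [hcoe]
        have h1 : Real.sqrt (2 * ((B:ℝ) * σ ^ 2)) = σ * Real.sqrt (2 * B) := by
          rw [show 2 * ((B:ℝ) * σ ^ 2) = σ ^ 2 * (2 * B) by ring,
            Real.sqrt_mul (sq_nonneg σ), Real.sqrt_sq hσ.le]
        rw [h1]
        have h2B : (0:ℝ) < Real.sqrt (2 * B) := Real.sqrt_pos.mpr (by positivity)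
        have hsb : Real.sqrt ((B:ℝ) / 2) * Real.sqrt (2 * B) = B := by
          rw [← Real.sqrt_mul (by positivity), show (B:ℝ) / 2 * (2 * B) = B ^ 2 by ring,
            Real.sqrt_sq hBpos.le]
        rw [div_eq_div_iff (by positivity) hσ.ne']
        linear_combination (-μ * σ) * hsb
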